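/- arXiv:1507.00810 — 3 statements merged into one kernel-verified Lean document; each statement's English description precedes it below -/
import Mathlib

section
/- There do not exist real numbers γ₀, γ₁ such that for all n ≥ 1 and all x ∈ (0, π), T_n(x) ≥ γ₀ + γ₁ x > 0, where T_n(x) = Σ_{k=0}^n b_k cos(kx) with b_{2k} = b_{2k+1} = C(2k,k)/4^k. -/
open Real Finset

noncomputable def b (k : ℕ) : ℝ := (Nat.choose (2*(k/2)) (k/2) : ℝ) / 4^(k/2)

noncomputable def T (n : ℕ) (x : ℝ) : ℝ := ∑ k ∈ Finset.range (n+1), b k * Real.cos (k * x)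

lemma one_sub_cos_le_half_sq (t : ℝ) : 1 - Real.cos t ≤ t^2/2 := by
  have h1 : Real.cos (2 * (t/2)) = 2 * Real.cos (t/2)^2 - 1 := Real.cos_two_mul (t/2)
  have h2 : Real.sin (t/2)^2 + Real.cos (t/2)^2 = 1 := Real.sin_sq_add_cos_sq (t/2)
  have h3 : Real.sin (t/2)^2 ≤ (t/2)^2 := Real.sin_sq_le_sq
  have ht : 2 * (t/2) = t := by ring
  rw [ht] at h1
  nlinarith

theorem stmt_2 : ¬ ∃ γ₀ γ₁ : ℝ, ∀ n : ℕ, 1 ≤ n → ∀ x ∈ Set.Ioo 0 Real.pi,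
    γ₀ + γ₁ * x ≤ T n x ∧ 0 < γ₀ + γ₁ * x := by
  rintro ⟨γ₀, γ₁, h⟩
  have hpi := Real.pi_pos
  set A := γ₀ + γ₁ * Real.pi with hA
  set B := γ₁ with hB
  have key : ∀ t ∈ Set.Ioo (0:ℝ) Real.pi, A - B * t ≤ t^2/2 ∧ 0 < A - B * t := by
    intro t ht
    obtain ⟨ht0, htpi⟩ := ht
    have hx : (Real.pi - t) ∈ Set.Ioo 0 Real.pi := ⟨by linarith, by linarith⟩
    obtain ⟨h1, h2⟩ := h 1 le_rfl _ hx
    have hT : T 1 (Real.pi - t) = 1 + Real.cos (Real.pi - t) := by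
      simp [T, b, Finset.sum_range_succ]
    have hc : Real.cos (Real.pi - t) = -Real.cos t := Real.cos_pi_sub t
    have hle : 1 - Real.cos t ≤ t^2/2 := one_sub_cos_le_half_sq t
    have hlin : γ₀ + γ₁ * (Real.pi - t) = A - B * t := by rw [hA, hB]; ring
    rw [hT, hc, hlin] at h1
    rw [hlin] at h2
    exact ⟨by linarith, h2⟩
  -- Step 1: A ≤ 0
  have hAle : A ≤ 0 := by
    by_contra hA0
    push_neg at hA0
    set t := min (Real.pi/2) (A / (|B| + Real.pi + 1)) with htdef
    have hden : (0:ℝ) < |B| + Real.pi + 1 := by positivity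
    have ht0 : 0 < t := lt_min (by linarith) (div_pos hA0 hden)
    have htpi2 : t ≤ Real.pi/2 := min_le_left _ _
    have htA : t ≤ A / (|B| + Real.pi + 1) := min_le_right _ _
    have htA' : (|B| + Real.pi + 1) * t ≤ A := by
      have := mul_le_mul_of_nonneg_left htA (le_of_lt hden)
      rwa [mul_div_cancel₀ A (ne_of_gt hden)] at this
    obtain ⟨k1, _⟩ := key t ⟨ht0, by linarith⟩
    have hBt : B * t ≤ |B| * t := mul_le_mul_of_nonneg_right (le_abs_self B) ht0.le
    nlinarith
  -- Step 2: B < 0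
  have hBneg : B < 0 := by
    obtain ⟨_, k2⟩ := key (Real.pi/2) ⟨by linarith, by linarith⟩
    nlinarith
  -- Step 3: 0 ≤ A
  have hAge : 0 ≤ A := by
    by_contra hA0
    push_neg at hA0
    set t := min (Real.pi/2) (A / (2*B)) with htdef
    have hAB : 0 < A / (2*B) := div_pos_of_neg_of_neg hA0 (by linarith)
    have ht0 : 0 < t := lt_min (by linarith) hAB
    have htpi2 : t ≤ Real.pi/2 := min_le_left _ _
    have htA : t ≤ A / (2*B) := min_le_right _ _
    have hBt : A/2 ≤ B * t := by
      have h2B : 2*B < 0 := by linarith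
      have := (le_div_iff_of_neg h2B).mp htA
      linarith
    obtain ⟨_, k2⟩ := key t ⟨ht0, by linarith⟩
    linarith
  have hA0 : A = 0 := le_antisymm hAle hAge
  -- Step 4: contradiction
  set t := min (Real.pi/2) (-B) with htdef
  have ht0 : 0 < t := lt_min (by linarith) (by linarith)
  have htpi2 : t ≤ Real.pi/2 := min_le_left _ _
  have htB : t ≤ -B := min_le_right _ _
  obtain ⟨k1, _⟩ := key t ⟨ht0, by linarith⟩
  rw [hA0] at k1
  nlinarith
end

section
/- For n ≥ 2 and x ∈ (0, π), T_n(x) ≥ 1 + cos(x) − (1 + sin(3x/2))/(4 sin(x/2)), where T_n(x) = Σ_{k=0}^n b_k cos(kx) with b_{2k} = b_{2k+1} = C(2k,k)/4^k. -/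
open Real Finset

lemma choose_bound (j : ℕ) : Nat.choose (2*j+2) (j+1) ≤ 4 * Nat.choose (2*j) j := by
  have h1 : (2*j+1+1) * Nat.choose (2*j+1) j = Nat.choose (2*j+1+1) (j+1) * (j+1) :=
    Nat.add_one_mul_choose_eq (2*j+1) j
  have h2 : Nat.choose (2*j+1) j ≤ 2 * Nat.choose (2*j) j := by
    cases j with
    | zero => simp
    | succ i =>
      have he : 2*(i+1)+1 = (2*i+2) + 1 := by ring
      rw [he]
      have h3 : Nat.choose (2*i+2+1) (i+1) = Nat.choose (2*i+2) i + Nat.choose (2*i+2) (i+1) :=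
        Nat.choose_succ_succ' (2*i+2) i
      have h4 : Nat.choose (2*i+2) i ≤ Nat.choose (2*i+2) (i+1) := by
        have := Nat.choose_le_middle i (2*i+2)
        simpa [show (2*i+2)/2 = i+1 by omega] using this
      have h5 : Nat.choose (2*(i+1)) (i+1) = Nat.choose (2*i+2) (i+1) := by ring_nf
      omega
  have h5 : Nat.choose (2*j+2) (j+1) * (j+1) ≤ (4 * Nat.choose (2*j) j) * (j+1) := by
    have h6 : Nat.choose (2*j+1+1) (j+1) * (j+1) ≤ (2*j+2) * (2 * Nat.choose (2*j) j) := by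
      rw [← h1]; exact Nat.mul_le_mul_left _ h2
    calc Nat.choose (2*j+2) (j+1) * (j+1) ≤ (2*j+2) * (2 * Nat.choose (2*j) j) := h6
      _ = (4 * Nat.choose (2*j) j) * (j+1) := by ring
  exact Nat.le_of_mul_le_mul_right h5 (Nat.succ_pos j)

lemma b_nonneg (k : ℕ) : 0 ≤ b k := by unfold b; positivity

lemma b_succ_le (k : ℕ) : b (k+1) ≤ b k := by
  rcases Nat.even_or_odd k with ⟨j, hj⟩ | ⟨j, hj⟩
  · subst hj
    have h1 : (j + j)/2 = j := by omega
    have h2 : (j + j + 1)/2 = j := by omega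
    simp [b, h1, h2]
  · subst hj
    have h1 : (2*j+1)/2 = j := by omega
    have h2 : (2*j+1+1)/2 = j+1 := by omega
    rw [b, b, h1, h2]
    rw [div_le_div_iff₀ (by positivity) (by positivity)]
    have hc : ((Nat.choose (2*(j+1)) (j+1) : ℝ)) ≤ 4 * Nat.choose (2*j) j := by
      have := choose_bound j
      have h : 2*(j+1) = 2*j+2 := by ring
      rw [h]; exact_mod_cast this
    have hp : (0:ℝ) < 4^j := by positivity
    have hcn : (0:ℝ) ≤ (Nat.choose (2*j) j : ℝ) := by positivity
    rw [pow_succ]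
    nlinarith

lemma b_anti : Antitone b := antitone_nat_of_succ_le b_succ_le

lemma key (x a : ℝ) : Real.sin ((2*a+1)*x/2) - Real.sin ((2*a-1)*x/2) = 2 * Real.sin (x/2) * Real.cos (a*x) := by
  rw [Real.sin_sub_sin]
  ring_nf

lemma hT2 (x : ℝ) : T 2 x = 1 + Real.cos x + (1/2) * Real.cos (2*x) := by
  norm_num [T, Finset.sum_range_succ, b]

theorem stmt_5 : ∀ n : ℕ, 2 ≤ n → ∀ x ∈ Set.Ioo 0 Real.pi,
    1 + Real.cos x - (1 + Real.sin (3*x/2)) / (4 * Real.sin (x/2)) ≤ T n x := by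
  intro n hn x hx
  obtain ⟨hx0, hxpi⟩ := hx
  have hs : 0 < Real.sin (x/2) := by
    apply Real.sin_pos_of_pos_of_lt_pi
    · linarith
    · nlinarith [Real.pi_pos]
  have claim : ∀ m : ℕ, 2 ≤ m →
      b m * (Real.sin ((2*(m:ℝ)+1)*x/2) - Real.sin (3*x/2))
        - (1/2 - b m) * (1 + Real.sin (3*x/2))
      ≤ 2 * Real.sin (x/2) * (T m x - 1 - Real.cos x) := by
    intro m hm
    induction m, hm using Nat.le_induction with
    | base =>
      have hb2 : b 2 = 1/2 := by norm_num [b]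
      have hk := key x 2
      rw [hT2, hb2]
      push_cast
      nlinarith [hk]
    | succ n hn ih =>
      have hTs : T (n+1) x = T n x + b (n+1) * Real.cos ((n+1 : ℕ) * x) := by
        rw [T, Finset.sum_range_succ]; rfl
      have hk := key x ((n:ℝ)+1)
      have harg : (2*((n:ℝ)+1)-1)*x/2 = (2*(n:ℝ)+1)*x/2 := by ring
      rw [harg] at hk
      have hble : b (n+1) ≤ b n := b_succ_le n
      have hbn : 0 ≤ b (n+1) := b_nonneg (n+1)
      have hcn : -1 ≤ Real.sin ((2*(n:ℝ)+1)*x/2) := Real.neg_one_le_sin _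
      rw [hTs]
      push_cast
      push_cast at ih
      nlinarith [mul_nonneg (sub_nonneg.mpr hble) (by linarith : (0:ℝ) ≤ Real.sin ((2*(n:ℝ)+1)*x/2) + 1)]
  have hc := claim n hn
  have hbn0 : 0 ≤ b n := b_nonneg n
  have hbn2 : b n ≤ 1/2 := by
    have := b_anti hn
    simpa [show b 2 = 1/2 by norm_num [b]] using this
  have hcn : -1 ≤ Real.sin ((2*(n:ℝ)+1)*x/2) := Real.neg_one_le_sin _
  have hs1 : -1 ≤ Real.sin (3*x/2) := Real.neg_one_le_sin _
  have hkey : -(1 + Real.sin (3*x/2))/2 ≤ 2 * Real.sin (x/2) * (T n x - 1 - Real.cos x) := by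
    nlinarith [mul_nonneg hbn0 (by linarith : (0:ℝ) ≤ Real.sin ((2*(n:ℝ)+1)*x/2) + 1),
      mul_nonneg (by linarith : (0:ℝ) ≤ 1/2 - b n) (by linarith : (0:ℝ) ≤ 1 + Real.sin (3*x/2))]
  have h4s : (0:ℝ) < 4 * Real.sin (x/2) := by linarith
  rw [sub_le_iff_le_add, ← sub_le_iff_le_add', le_div_iff₀ h4s]
  nlinarith [hkey]
end

section
/- For all x with 3π/8 ≤ x < π, one has (123/1000)(π − x)^2 < 1 + cos(x) − (1 + sin(3x/2))/(4 sin(x/2)). -/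
open Real

set_option maxHeartbeats 1000000 in
lemma aux_lo_stmt6 (y : ℝ) (hy0 : 0 < y) (hy : y ≤ 63/64) :
    123/1000 * (2*y)^2 * (4*(1 - y^2/2)) + y^2/100
      ≤ (5/4 - (1-y^2/2)^2)*(4*(1-y^2/2)) - 1 := by
  nlinarith [mul_pos hy0 hy0, mul_pos (mul_pos hy0 hy0) (mul_pos hy0 hy0),
    sq_nonneg (y*y - 1), mul_pos (mul_pos hy0 hy0) hy0]

set_option maxHeartbeats 1000000 in
lemma aux_hi_stmt6 (z : ℝ) (hz0 : 0 < z) (hz : z ≤ 3969/4096) :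
    123/1000 * (4*z) * (4*(1 - z/2 + 37/768*z^2)) + z/100 ≤
      (5/4 - (1 - z/2 + 37/768*z^2)^2)*(4*(1 - z/2 + 37/768*z^2)) - 1 := by
  nlinarith [mul_pos hz0 hz0, mul_pos (mul_pos hz0 hz0) hz0,
    mul_pos (mul_pos hz0 hz0) (mul_pos hz0 hz0),
    mul_nonneg (mul_nonneg hz0.le hz0.le) (by linarith : (0:ℝ) ≤ 3969/4096 - z),
    mul_nonneg (mul_nonneg (mul_nonneg hz0.le hz0.le) hz0.le) (by linarith : (0:ℝ) ≤ 3969/4096 - z),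
    sq_nonneg (z - 3969/4096)]

lemma aux_L0_stmt6 (y : ℝ) (hy0 : 0 < y) (hy : y ≤ 63/64) :
    (0:ℝ) ≤ y/2 - (y/2)^3/6 - (y/2)^4 * (5/96) := by
  nlinarith [mul_nonneg hy0.le (mul_nonneg (by linarith : (0:ℝ) ≤ 1/2 - y/2) hy0.le),
    mul_nonneg (mul_nonneg hy0.le hy0.le) (mul_nonneg (by linarith : (0:ℝ) ≤ 1/2 - y/2) hy0.le),
    mul_nonneg (mul_nonneg (mul_nonneg hy0.le hy0.le) hy0.le) (by linarith : (0:ℝ) ≤ 1/2 - y/2)]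

set_option maxHeartbeats 1000000 in
lemma aux_comb_stmt6 (y s : ℝ) (hy0 : 0 < y) (hy : y ≤ 63/64)
    (hlo : 1 - y^2/2 ≤ s) (hhi : s ≤ 1 - y^2/2 + 37/768*y^4) :
    123/1000 * (2*y)^2 * (4*s) < (5/4 - s^2)*(4*s) - 1 := by
  have hGlo := aux_lo_stmt6 y hy0 hy
  have hz0 : (0:ℝ) < y^2 := by positivity
  have hz : y^2 ≤ 3969/4096 := by nlinarith
  have hGhi := aux_hi_stmt6 (y^2) hz0 hz
  have h1 : (0:ℝ) ≤ s - (1 - y^2/2) := by linarith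
  have h2 : (0:ℝ) ≤ 1 - y^2/2 + 37/768*y^4 - s := by linarith
  have hcc : (0:ℝ) ≤ (s - (1 - y^2/2)) * (1 - y^2/2 + 37/768*y^4 - s)
      * (s + (1 - y^2/2) + (1 - y^2/2 + 37/768*y^4)) := by
    apply mul_nonneg (mul_nonneg h1 h2)
    nlinarith
  have hD : (0:ℝ) < 37/768*y^4 := by positivity
  -- key product inequality (concavity interpolation identity)
  have hexpr : ((5/4 - s^2)*(4*s) - 1 - 123/1000 * (2*y)^2 * (4*s) - y^2/100)
      * (37/768*y^4) ≥ 0 := by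
    nlinarith [mul_nonneg h2 (by linarith : (0:ℝ) ≤ (5/4 - (1-y^2/2)^2)*(4*(1-y^2/2)) - 1
        - 123/1000 * (2*y)^2 * (4*(1 - y^2/2)) - y^2/100),
      mul_nonneg h1 (by linarith : (0:ℝ) ≤ (5/4 - (1 - y^2/2 + 37/768*(y^2)^2)^2)
        * (4*(1 - y^2/2 + 37/768*(y^2)^2)) - 1
        - 123/1000 * (4*y^2) * (4*(1 - y^2/2 + 37/768*(y^2)^2)) - y^2/100),
      hcc]
  by_contra hcon
  push_neg at hcon
  have hneg : (0:ℝ) ≤ (123/1000 * (2*y)^2 * (4*s) - ((5/4 - s^2)*(4*s) - 1)) := by linarith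
  nlinarith [mul_nonneg hneg hD.le, hexpr, mul_pos (show (0:ℝ) < y^2/100 by positivity) hD]

set_option maxHeartbeats 1000000 in
theorem stmt_6 : ∀ x ∈ Set.Ico (3*Real.pi/8) Real.pi,
    (123/1000) * (Real.pi - x)^2 <
      1 + Real.cos x - (1 + Real.sin (3*x/2)) / (4 * Real.sin (x/2)) := by
  intro x hx
  obtain ⟨hx1, hx2⟩ := hx
  have hpi1 : Real.pi < 3.15 := Real.pi_lt_d2
  have hpi2 : 3.14 < Real.pi := Real.pi_gt_d2
  obtain ⟨y, hy_def⟩ : ∃ y : ℝ, y = Real.pi/2 - x/2 := ⟨_, rfl⟩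
  have hy0 : 0 < y := by rw [hy_def]; linarith
  have hy64 : y ≤ 63/64 := by rw [hy_def]; linarith
  have hs : Real.sin (x/2) = Real.cos y := by
    rw [hy_def, Real.cos_pi_div_two_sub]
  have hs0 : (0:ℝ) < Real.cos y := by
    apply Real.cos_pos_of_mem_Ioo
    constructor
    · rw [hy_def]; linarith
    · rw [hy_def]; linarith
  have hcosx : Real.cos x = 1 - 2 * Real.cos y^2 := by
    have h := Real.cos_two_mul (x/2)
    have h2 := Real.sin_sq_add_cos_sq (x/2)
    rw [show 2*(x/2) = x by ring] at h
    rw [hs] at h2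
    nlinarith [h, h2]
  have hsin3 : Real.sin (3*x/2) = 3*Real.cos y - 4*Real.cos y^3 := by
    have h := Real.sin_three_mul (x/2)
    rw [show 3*(x/2) = 3*x/2 by ring, hs] at h
    linarith [h]
  have hpx : Real.pi - x = 2*y := by rw [hy_def]; ring
  -- bounds on cos y
  have ha1 : |y/2| ≤ 1 := by rw [abs_of_pos (by linarith)]; linarith
  have hb := Real.sin_bound ha1
  rw [abs_of_pos (by linarith : (0:ℝ) < y/2), abs_le] at hb
  have hL0 := aux_L0_stmt6 y hy0 hy64
  have hsinlo : y/2 - (y/2)^3/6 - (y/2)^4 * (5/96) ≤ Real.sin (y/2) := by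
    nlinarith [hb.1, mul_nonneg (pow_nonneg (by linarith : (0:ℝ) ≤ y/2) 4) (by linarith : (0:ℝ) ≤ 1 - y/2)]
  have hcosy : Real.cos y = 1 - 2 * Real.sin (y/2)^2 := by
    have h := Real.cos_two_mul (y/2)
    have h2 := Real.sin_sq_add_cos_sq (y/2)
    rw [show 2*(y/2) = y by ring] at h
    nlinarith [h, h2]
  have hlo : 1 - y^2/2 ≤ Real.cos y := Real.one_sub_sq_div_two_le_cos
  have hhi : Real.cos y ≤ 1 - y^2/2 + 37/768*y^4 := by
    have h1 : (y/2 - (y/2)^3/6 - (y/2)^4 * (5/96))^2 ≤ Real.sin (y/2)^2 := by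
      nlinarith [hsinlo, hL0]
    rw [hcosy]
    nlinarith [h1, sq_nonneg ((y/2)^3/6 + (y/2)^4 * (5/96)), hy0.le, hy64,
      mul_nonneg (mul_nonneg (mul_nonneg hy0.le hy0.le) (mul_nonneg hy0.le hy0.le))
        (by linarith : (0:ℝ) ≤ 63/64 - y)]
  -- rewrite the goal
  rw [hcosx, hsin3, hs, hpx]
  have h4s : (0:ℝ) < 4*Real.cos y := by linarith
  have e2 : 1 + (1 - 2*Real.cos y^2) - (1 + (3*Real.cos y - 4*Real.cos y^3)) / (4*Real.cos y)
      = ((5/4 - Real.cos y^2)*(4*Real.cos y) - 1)/(4*Real.cos y) := by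
    field_simp
    ring
  rw [e2, lt_div_iff₀ h4s]
  exact aux_comb_stmt6 y (Real.cos y) hy0 hy64 hlo hhi
end
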